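/- For every prime p ≥ 3 and every real ε > 0, there exists n_0 such that for every n ≥ n_0 the following holds: if A ⊆ F_p^n contains no p vectors (repetitions allowed), not all equal, whose sum is the zero vector, then |A| ≤ ε·p^n. -/

import Mathlib

/-- For every prime `p ≥ 3` and `ε > 0`, for all sufficiently
large `n`: if `A ⊆ F_p^n` contains no `p` vectors (with repetition), not all
equal, summing to zero, then `|A| ≤ ε·p^n`. -/
theorem stmt_18 (p : ℕ) (hp : p.Prime) (hp3 : 3 ≤ p) (ε : ℝ) (hε : 0 < ε) :
    ∃ n₀ : ℕ, ∀ n : ℕ, n₀ ≤ n →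
      ∀ A : Finset (Fin n → ZMod p),
        (∀ x : Fin p → Fin n → ZMod p, (∀ i, x i ∈ A) →
          ∑ i, x i = 0 → ∀ a b, x a = x b) →
        (A.card : ℝ) ≤ ε * (p ^ n : ℝ) := by
  haveI : NeZero p := ⟨by omega⟩
  refine ⟨cornersTheoremBound ε, fun n hn A hA => ?_⟩
  by_contra hcard
  push_neg at hcard
  have hcardG : Fintype.card (Fin n → ZMod p) = p ^ n := by
    simp [ZMod.card]
  have hG : cornersTheoremBound ε ≤ Fintype.card (Fin n → ZMod p) := by
    rw [hcardG]
    calc cornersTheoremBound ε ≤ n := hn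
    _ ≤ p ^ n := (Nat.lt_pow_self (n := n) (by omega : 1 < p)).le
  refine roth_3ap_theorem ε hε hG A ?_ ?_
  · rw [hcardG]
    push_cast
    exact hcard.le
  · intro a ha b hb c hc habc
    set x : Fin p → Fin n → ZMod p :=
      fun i => if (i : ℕ) = 0 then a else if (i : ℕ) = 1 then c else b with hx
    have hmem : ∀ i, x i ∈ A := by
      intro i
      simp only [hx]
      split
      · exact ha
      · split
        · exact hc
        · exact hb
    have hsum : ∑ i, x i = 0 := by
      have h1 : ∀ i : Fin p, x i = b + ((if (i : ℕ) = 0 then a - b else 0)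
          + (if (i : ℕ) = 1 then c - b else 0)) := by
        intro i
        simp only [hx]
        split
        · rename_i h0
          rw [if_neg (by omega)]
          abel
        · split
          · abel
          · abel
      rw [Finset.sum_congr rfl (fun i _ => h1 i)]
      rw [Finset.sum_add_distrib, Finset.sum_add_distrib, Finset.sum_const,
        Finset.card_univ, Fintype.card_fin]
      have e0 : ∑ i : Fin p, (if (i : ℕ) = 0 then a - b else 0) = a - b := by
        rw [Fin.sum_univ_eq_sum_range (fun k => if k = 0 then a - b else 0)]
        rw [Finset.sum_ite_eq' (Finset.range p) 0 (fun _ => a - b)]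
        rw [if_pos (Finset.mem_range.2 (by omega))]
      have e1 : ∑ i : Fin p, (if (i : ℕ) = 1 then c - b else 0) = c - b := by
        rw [Fin.sum_univ_eq_sum_range (fun k => if k = 1 then c - b else 0)]
        rw [Finset.sum_ite_eq' (Finset.range p) 1 (fun _ => c - b)]
        rw [if_pos (Finset.mem_range.2 (by omega))]
      rw [e0, e1]
      have hpb : p • b = 0 := by
        funext j
        simp [nsmul_eq_mul, ZMod.natCast_self]
      rw [hpb, zero_add]
      have : a + c = b + b := habc
      linear_combination (norm := abel) this
    have := hA x hmem hsum ⟨0, by omega⟩ ⟨2, by omega⟩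
    simpa [hx] using this
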